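/- For positive reals λ_e, λ and for every integer n ≥ 2, the semi-distributed mean age a(n) = (λ_e + (nλ/(n-1))·(λ_e/λ)) / (λ/n + nλ/(n-1)) satisfies λ_e/λ ≤ a(n) ≤ 2λ_e/λ. -/

import Mathlib

theorem semi_age_bounds (lam_e lam : ℝ) (hle : 0 < lam_e) (hl : 0 < lam)
    (n : ℕ) (hn : 2 ≤ n) :
    lam_e / lam ≤
      (lam_e + ((n : ℝ) * lam / ((n : ℝ) - 1)) * (lam_e / lam)) /
        (lam / (n : ℝ) + (n : ℝ) * lam / ((n : ℝ) - 1)) ∧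
    (lam_e + ((n : ℝ) * lam / ((n : ℝ) - 1)) * (lam_e / lam)) /
        (lam / (n : ℝ) + (n : ℝ) * lam / ((n : ℝ) - 1)) ≤ 2 * lam_e / lam := by
  have hx : (2:ℝ) ≤ (n:ℝ) := by exact_mod_cast hn
  have hx1 : (0:ℝ) < (n:ℝ) - 1 := by linarith
  have hxpos : (0:ℝ) < (n:ℝ) := by linarith
  have hden : 0 < lam / (n:ℝ) + (n:ℝ) * lam / ((n:ℝ) - 1) := by positivity
  constructor
  · rw [div_le_div_iff₀ hl hden, ← sub_nonneg]
    have hkey : (lam_e + (n:ℝ) * lam / ((n:ℝ) - 1) * (lam_e / lam)) * lam -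
        lam_e * (lam / (n:ℝ) + (n:ℝ) * lam / ((n:ℝ) - 1)) =
        lam_e * lam * (1 - 1 / (n:ℝ)) := by
      field_simp; ring
    rw [hkey]
    have h1 : 1 / (n:ℝ) ≤ 1 := by rw [div_le_one hxpos]; linarith
    nlinarith [mul_pos hle hl]
  · rw [div_le_div_iff₀ hden hl]
    have h1 : (n:ℝ) * lam / ((n:ℝ) - 1) * (lam_e / lam) = (n:ℝ) * lam_e / ((n:ℝ) - 1) := by
      field_simp
    rw [h1, ← sub_nonneg]
    have hkey : 2 * lam_e * (lam / (n:ℝ) + (n:ℝ) * lam / ((n:ℝ) - 1)) -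
        (lam_e + (n:ℝ) * lam_e / ((n:ℝ) - 1)) * lam =
        lam_e * lam * (2 / (n:ℝ) + (n:ℝ) / ((n:ℝ) - 1) - 1) := by
      field_simp; ring
    rw [hkey]
    have : (1:ℝ) ≤ (n:ℝ) / ((n:ℝ) - 1) := by
      rw [le_div_iff₀ hx1]; linarith
    have h2 : (0:ℝ) < 2 / (n:ℝ) := by positivity
    nlinarith [mul_pos hle hl]
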